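/- Let k > 0 and let w_k be the unique real number w with -1 ≤ w < 0 satisfying w·exp(w) = -(k+1)·exp(-(k+1)). Then for every v > 0, (v - k - 1)·(1 - exp(-(w_k + k + 1))) ≤ v - 1 - ln v, with equality exactly at v = exp(w_k + k + 1). That is, the border profit π3 never exceeds the Region-2 optimal profit π2 = v - 1 - ln v. -/
import Mathlib


/-- With `w = w_k` the value in `[-1, 0)` satisfying `w·eʷ = -(k+1)·e^{-(k+1)}`,
for every `v > 0` the border profit `π3 = (v-k-1)·(1 - exp(-(w+k+1)))` never
exceeds `π2 = v - 1 - ln v`, with equality exactly at `v = exp(w + k + 1)`. -/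
theorem stmt9 (k w : ℝ) (hk : 0 < k) (hw1 : -1 ≤ w) (hw2 : w < 0)
    (hwe : w * Real.exp w = -(k + 1) * Real.exp (-(k + 1))) :
    (∀ v : ℝ, 0 < v →
      (v - k - 1) * (1 - Real.exp (-(w + k + 1))) ≤ v - 1 - Real.log v) ∧
    (∀ v : ℝ, 0 < v →
      ((v - k - 1) * (1 - Real.exp (-(w + k + 1))) = v - 1 - Real.log v ↔
        v = Real.exp (w + k + 1))) := by
  have hkey : (k + 1) * Real.exp (-(w + k + 1)) = -w := by
    have hsplit : Real.exp (-(w + k + 1)) = Real.exp (-(k + 1)) * Real.exp (-w) := by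
      rw [← Real.exp_add]; ring_nf
    rw [hsplit]
    have h2 : (k + 1) * Real.exp (-(k + 1)) = -(w * Real.exp w) := by linarith
    calc (k + 1) * (Real.exp (-(k + 1)) * Real.exp (-w))
        = ((k + 1) * Real.exp (-(k + 1))) * Real.exp (-w) := by ring
      _ = -(w * Real.exp w) * Real.exp (-w) := by rw [h2]
      _ = -w * (Real.exp w * Real.exp (-w)) := by ring
      _ = -w := by rw [← Real.exp_add]; simp
  have keyeq : ∀ v : ℝ, 0 < v →
      v - 1 - Real.log v - (v - k - 1) * (1 - Real.exp (-(w + k + 1)))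
        = v * Real.exp (-(w + k + 1)) - 1
          - Real.log (v * Real.exp (-(w + k + 1))) := by
    intro v hv
    rw [Real.log_mul (ne_of_gt hv) (Real.exp_ne_zero _), Real.log_exp]
    linear_combination -hkey
  have ht : ∀ v : ℝ, 0 < v → 0 < v * Real.exp (-(w + k + 1)) := fun v hv =>
    mul_pos hv (Real.exp_pos _)
  have hiff : ∀ v : ℝ, 0 < v →
      (v * Real.exp (-(w + k + 1)) = 1 ↔ v = Real.exp (w + k + 1)) := by
    intro v hv
    rw [Real.exp_neg]
    have := Real.exp_pos (w + k + 1)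
    constructor
    · intro h
      field_simp at h
      linarith
    · intro h
      rw [h]
      field_simp
  constructor
  · intro v hv
    have h1 := Real.log_le_sub_one_of_pos (ht v hv)
    have h2 := keyeq v hv
    linarith
  · intro v hv
    constructor
    · intro h
      by_contra hne
      have hne1 : v * Real.exp (-(w + k + 1)) ≠ 1 := fun hh =>
        hne ((hiff v hv).mp hh)
      have := Real.log_lt_sub_one_of_pos (ht v hv) hne1
      have h2 := keyeq v hv
      linarith
    · intro h
      have h1 : v * Real.exp (-(w + k + 1)) = 1 := (hiff v hv).mpr h
      have h2 := keyeq v hv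
      rw [h1, Real.log_one] at h2
      linarith
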